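/- Define S_n(x,q) by S_0(x,q)=1 and S_{n+1}(x,q) = (q+nx)·S_n(x,q) + x(1-2x)·∂_x S_n(x,q). Then for all n ≥ 1, S_{2m}(x,-1) = (1-x)(1-2x)^{m-1} and S_{2m+1}(x,-1) = -(1-2x)^m. -/
import Mathlib


open Polynomial in
/-- The polynomials `S_n(x,q)` (for a fixed value of `q`), defined by `S_0(x,q) = 1` and
`S_{n+1}(x,q) = (q + n x)·S_n(x,q) + x(1-2x)·∂_x S_n(x,q)`. -/
noncomputable def Sq (q : ℝ) : ℕ → Polynomial ℝ
  | 0 => 1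
  | n + 1 =>
      (Polynomial.C q + Polynomial.C (n : ℝ) * X) * Sq q n +
        X * (1 - 2 * X) * (Sq q n).derivative

open Polynomial in
lemma Sq_helper (m : ℕ) :
    (1 - 2*X : ℝ[X]) * derivative ((1 - 2*X)^m) = C (-2*(m:ℝ)) * (1-2*X)^m := by
  cases m with
  | zero => simp
  | succ j =>
    rw [derivative_pow]
    simp only [Nat.add_sub_cancel, derivative_sub, derivative_one, derivative_mul,
      derivative_ofNat, derivative_X, map_neg, map_mul, map_natCast, pow_succ,
      map_ofNat]
    push_cast
    ring

open Polynomial in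
lemma Sq_aux (m : ℕ) :
    Sq (-1) (2*m+1) = -((1-2*X : ℝ[X])^m) ∧
    Sq (-1) (2*m+2) = (1-X) * (1-2*X)^m := by
  induction m with
  | zero =>
    have e1 : Sq (-1) 1 = -1 := by
      show Sq (-1) (0+1) = _
      simp [Sq]
    constructor
    · show Sq (-1) 1 = _
      rw [e1]; simp
    · show Sq (-1) (1+1) = _
      rw [Sq, e1]
      simp
      ring
  | succ k ih =>
    obtain ⟨h1, h2⟩ := ih
    have h3 : Sq (-1) (2*k+3) = -((1-2*X : ℝ[X])^(k+1)) := by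
      show Sq (-1) ((2*k+2)+1) = _
      rw [Sq, h2]
      rw [derivative_mul, derivative_sub, derivative_one, derivative_X]
      have : X * (1 - 2*X) * ((0 - 1) * (1-2*X : ℝ[X])^k + (1-X) * derivative ((1-2*X)^k))
          = -(X * (1-2*X)^(k+1)) + X*(1-X) * ((1-2*X) * derivative ((1-2*X)^k)) := by
        rw [pow_succ]; ring
      rw [this, Sq_helper]
      simp only [map_neg, map_mul, map_natCast, map_ofNat, map_one]
      push_cast
      rw [show ((1:ℝ[X])-2*X)^(k+1) = (1-2*X)^k * (1-2*X) from pow_succ _ _]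
      ring
    constructor
    · exact h3
    · show Sq (-1) ((2*k+3)+1) = _
      rw [Sq, h3]
      rw [derivative_neg, derivative_pow]
      simp only [derivative_sub, derivative_one, derivative_mul, derivative_ofNat,
        derivative_X, Nat.add_sub_cancel, map_natCast]
      push_cast
      simp only [map_neg, map_one]
      rw [show ((1:ℝ[X])-2*X)^(k+1) = (1-2*X)^k * (1-2*X) from pow_succ _ _]
      ring

open Polynomial in
/-- For all `n ≥ 1`: `S_{2m}(x,-1) = (1-x)(1-2x)^{m-1}` and
`S_{2m+1}(x,-1) = -(1-2x)^m`. -/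
theorem stmt16 :
    (∀ m : ℕ, 1 ≤ m → Sq (-1) (2 * m) = (1 - X) * (1 - 2 * X) ^ (m - 1)) ∧
    (∀ m : ℕ, Sq (-1) (2 * m + 1) = -((1 - 2 * X) ^ m)) := by
  constructor
  · rintro (_ | j) hm
    · omega
    · have := (Sq_aux j).2
      rw [show 2*(j+1) = 2*j+2 from by ring, this]
      simp
  · intro m
    exact (Sq_aux m).1
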